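/- An oriented double ray with an even, non-zero number of turns contains exactly one tail that is an in-ray and exactly one tail that is an out-ray; more precisely, if s is the first turn and t is the last turn of R, then exactly one of Rs and tR is an in-ray and the other is an out-ray. -/

import Mathlib

/-- A copy of the digraph `H` in the digraph `D`: an injective arc-preserving map. -/
structure DCopy {V W : Type} (H : Digraph V) (D : Digraph W) where
  toFun : V → W
  inj : Function.Injective toFun
  adj : ∀ u v : V, H.Adj u v → D.Adj (toFun u) (toFun v)

/-- Two copies are vertex-disjoint if their images are disjoint. -/
def DCopy.VDisjoint {V W : Type} {H : Digraph V} {D : Digraph W}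
    (c₁ c₂ : DCopy H D) : Prop :=
  ∀ u v : V, c₁.toFun u ≠ c₂.toFun v

/-- `D` contains arbitrarily many pairwise vertex-disjoint copies of `H`. -/
def ManyDisjointCopies {V W : Type} (H : Digraph V) (D : Digraph W) : Prop :=
  ∀ k : ℕ, ∃ f : Fin k → DCopy H D, ∀ i j : Fin k, i ≠ j → (f i).VDisjoint (f j)

/-- `D` contains infinitely many pairwise vertex-disjoint copies of `H`. -/
def InfDisjointCopies {V W : Type} (H : Digraph V) (D : Digraph W) : Prop :=
  ∃ f : ℕ → DCopy H D, ∀ i j : ℕ, i ≠ j → (f i).VDisjoint (f j)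

/-- A digraph `H` is ubiquitous if every digraph containing arbitrarily many
pairwise disjoint copies of `H` contains infinitely many. -/
def Ubiquitous {V : Type} (H : Digraph V) : Prop :=
  ∀ (W : Type) (D : Digraph W), ManyDisjointCopies H D → InfDisjointCopies H D

/-- The oriented double ray on `ℤ` determined by the orientation function `o`:
`o n = true` means the arc between `n` and `n+1` points from `n` to `n+1`. -/
def doubleRay (o : ℤ → Bool) : Digraph ℤ where
  Adj u v := (v = u + 1 ∧ o u = true) ∨ (u = v + 1 ∧ o v = false)

/-- A turn of the double ray: a vertex of in-degree 2 or out-degree 2. -/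
def IsTurn (o : ℤ → Bool) (n : ℤ) : Prop := o (n - 1) ≠ o n

/-- The oriented ray on `ℕ` determined by the orientation function `r`:
`r i = true` means the arc between `i` and `i+1` points from `i` to `i+1`
(away from the root `0`). -/
def rayD (r : ℕ → Bool) : Digraph ℕ where
  Adj u v := (v = u + 1 ∧ r u = true) ∨ (u = v + 1 ∧ r v = false)

/-- The backward tail `Rv` of the double ray, as a ray rooted at `v`:
index `i` corresponds to the vertex `v - i`. -/
def backTail (o : ℤ → Bool) (v : ℤ) : ℕ → Bool := fun i => !o (v - i - 1)

/-- The forward tail `vR` of the double ray, as a ray rooted at `v`: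
index `i` corresponds to the vertex `v + i`. -/
def fwdTail (o : ℤ → Bool) (v : ℤ) : ℕ → Bool := fun i => o (v + i)

/-- A digraph homomorphism (endomorphism) of the ray `rayD r`. -/
def IsRayHom (r : ℕ → Bool) (f : ℕ → ℕ) : Prop :=
  ∀ u v : ℕ, (rayD r).Adj u v → (rayD r).Adj (f u) (f v)

/-- A ray is periodic if it has a non-trivial order-preserving endomorphism. -/
def RayPeriodic (r : ℕ → Bool) : Prop :=
  ∃ f : ℕ → ℕ, IsRayHom r f ∧ Monotone f ∧ f ≠ id

/-- `p` is the periodicity of the ray `rayD r`: the least distance `d(v, f v)`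
over all vertices `v` and non-trivial order-preserving endomorphisms `f`. -/
def RayPeriodicity (r : ℕ → Bool) (p : ℕ) : Prop :=
  IsLeast {d : ℕ | ∃ f : ℕ → ℕ, IsRayHom r f ∧ Monotone f ∧ f ≠ id ∧
    ∃ v : ℕ, Nat.dist (f v) v = d} p

/-- A digraph homomorphism (endomorphism) of the double ray `doubleRay o`. -/
def IsDRayHom (o : ℤ → Bool) (f : ℤ → ℤ) : Prop :=
  ∀ u v : ℤ, (doubleRay o).Adj u v → (doubleRay o).Adj (f u) (f v)

/-- A double ray is periodic if it has a non-trivial order-preserving endomorphism. -/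
def DRayPeriodic (o : ℤ → Bool) : Prop :=
  ∃ f : ℤ → ℤ, IsDRayHom o f ∧ Monotone f ∧ f ≠ id

/-- `p` is the periodicity of the double ray `doubleRay o`. -/
def DRayPeriodicity (o : ℤ → Bool) (p : ℕ) : Prop :=
  IsLeast {d : ℕ | ∃ f : ℤ → ℤ, IsDRayHom o f ∧ Monotone f ∧ f ≠ id ∧
    ∃ v : ℤ, (f v - v).natAbs = d} p

/-- The rays `rayD r` and `rayD r'` are isomorphic as digraphs. -/
def RayIso (r r' : ℕ → Bool) : Prop :=
  ∃ φ : ℕ ≃ ℕ, ∀ u v : ℕ, (rayD r).Adj u v ↔ (rayD r').Adj (φ u) (φ v)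

/-- The ray `rayD r` is isomorphic to a subdigraph of the ray `rayD r'`. -/
def RayLE (r r' : ℕ → Bool) : Prop :=
  ∃ f : ℕ → ℕ, Function.Injective f ∧
    ∀ u v : ℕ, (rayD r).Adj u v → (rayD r').Adj (f u) (f v)

/-- An in-ray: every arc points towards the root. -/
def IsInRay (r : ℕ → Bool) : Prop := ∀ i : ℕ, r i = false

/-- An out-ray: every arc points away from the root. -/
def IsOutRay (r : ℕ → Bool) : Prop := ∀ i : ℕ, r i = true

lemma parity_aux (o : ℤ → Bool) (s : ℤ) :
    ∀ k : ℤ, s - 1 ≤ k →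
      ((Even ((Finset.Icc s k).filter (fun n => o (n-1) ≠ o n)).card) ↔ o k = o (s-1)) := by
  refine Int.le_induction (motive := fun k _ =>
      (Even ((Finset.Icc s k).filter (fun n => o (n-1) ≠ o n)).card) ↔ o k = o (s-1)) ?_ ?_
  · simp [Finset.Icc_eq_empty_of_lt (by omega : s - 1 < s)]
  · intro n hn ih
    have hins : Finset.Icc s (n+1) = insert (n+1) (Finset.Icc s n) := by
      ext x; simp only [Finset.mem_Icc, Finset.mem_insert]; omega
    rw [hins, Finset.filter_insert]
    by_cases h : o ((n+1)-1) ≠ o (n+1)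
    · rw [if_pos h, Finset.card_insert_of_notMem (by simp)]
      simp only [Nat.even_add_one, ih]
      have h' : o n ≠ o (n+1) := by simpa using h
      cases hb : o n <;> cases hb' : o (n+1) <;> cases hb'' : o (s-1) <;> simp_all
    · rw [if_neg h, ih]
      have h' : o n = o (n+1) := by
        by_contra hc; exact h (by simpa using hc)
      rw [h']

/-- if a double ray has an even, non-zero (finite) number of turns,
`s` is its first turn and `t` its last turn, then exactly one of the tails
`Rs`, `tR` is an in-ray and the other is an out-ray. -/
theorem even_turns_in_out_ray (o : ℤ → Bool) (s t : ℤ)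
    (hfin : {n : ℤ | IsTurn o n}.Finite)
    (hne : {n : ℤ | IsTurn o n}.Nonempty)
    (heven : Even {n : ℤ | IsTurn o n}.ncard)
    (hs : IsTurn o s ∧ ∀ n : ℤ, IsTurn o n → s ≤ n)
    (ht : IsTurn o t ∧ ∀ n : ℤ, IsTurn o n → n ≤ t) :
    Xor' (IsInRay (backTail o s) ∧ IsOutRay (fwdTail o t))
         (IsOutRay (backTail o s) ∧ IsInRay (fwdTail o t)) := by
  have hst : s ≤ t := ht.2 s hs.1
  -- o is constant below s-1
  have hbelow : ∀ n : ℤ, n ≤ s - 1 → o n = o (s - 1) := by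
    refine Int.le_induction_down (motive := fun n _ => o n = o (s-1)) rfl ?_
    intro n hn ihn
    have hnt : ¬ IsTurn o n := fun h => by have := hs.2 n h; omega
    have : o (n - 1) = o n := by
      by_contra hc; exact hnt hc
    rw [this]; exact ihn
  -- o is constant above t
  have habove : ∀ n : ℤ, t ≤ n → o n = o t := by
    refine Int.le_induction (motive := fun n _ => o n = o t) rfl ?_
    intro n hn ihn
    have hnt : ¬ IsTurn o (n + 1) := fun h => by have := ht.2 _ h; omega
    have : o (n + 1 - 1) = o (n + 1) := by
      by_contra hc; exact hnt hc
    rw [show n + 1 - 1 = n by ring] at this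
    rw [← this]; exact ihn
  -- the turn set is the filtered interval
  have hset : {n : ℤ | IsTurn o n} =
      ↑((Finset.Icc s t).filter (fun n => o (n-1) ≠ o n)) := by
    ext n
    simp only [Set.mem_setOf_eq, Finset.coe_filter, Finset.mem_Icc, Set.mem_setOf_eq]
    constructor
    · intro h; exact ⟨⟨hs.2 n h, ht.2 n h⟩, h⟩
    · intro h; exact h.2
  have hcard : {n : ℤ | IsTurn o n}.ncard =
      ((Finset.Icc s t).filter (fun n => o (n-1) ≠ o n)).card := by
    rw [hset, Set.ncard_coe_finset]
  have hts : o t = o (s - 1) := by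
    have := (parity_aux o s t (by omega)).mp (by rwa [hcard] at heven)
    exact this
  have hsturn : o (s - 1) ≠ o s := hs.1
  cases hb : o (s - 1) with
  | true =>
    left
    constructor
    · constructor
      · intro i
        have h1 : o (s - i - 1) = o (s - 1) := hbelow _ (by omega)
        simp [backTail, h1, hb]
      · intro i
        have h1 : o (t + i) = o t := habove _ (by omega)
        simp [fwdTail, h1, hts, hb]
    · rintro ⟨h1, -⟩
      have := h1 0
      simp [backTail, IsOutRay] at this
      rw [this] at hb; exact Bool.noConfusion hb
  | false =>
    right
    constructor
    · constructor
      · intro i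
        have h1 : o (s - i - 1) = o (s - 1) := hbelow _ (by omega)
        simp [backTail, h1, hb]
      · intro i
        have h1 : o (t + i) = o t := habove _ (by omega)
        simp [fwdTail, h1, hts, hb]
    · rintro ⟨h1, -⟩
      have := h1 0
      simp [backTail, IsInRay] at this
      rw [this] at hb; exact Bool.noConfusion hb
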